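/- Lemma 1 (Appendix B). Let E₁ be a finite multiset of real numbers, let ε ∈ (0,1] with ε ≤ 1/4 and 1 ≤ ⌈(1+|E₁|)(1−ε)⌉ ≤ |E₁|, and set q := q(E₁, ε). Let A and B be finite multisets of reals with |A| = t_l ≥ 2, |B| = t_r ≥ t_l, every element of A being ≤ q, and every element of B being > q. Let E₂ := E₁ + A + B (multiset sum), and assume ⌈(1+|E₂|)(1−ε)⌉ ≤ |E₂|. Then q(E₂, ε) ≥ q(E₁, ε). -/

import Mathlib

lemma countP_le_of_ge {l : List ℝ} (hs : l.Pairwise (· ≤ ·)) {q : ℝ} {i : ℕ} (hi : i < l.length)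
    (hq : q ≤ l[i]) : l.countP (fun x => decide (x < q)) ≤ i := by
  have hsplit : l.countP (fun x => decide (x < q)) =
      (l.take i).countP (fun x => decide (x < q)) + (l.drop i).countP (fun x => decide (x < q)) := by
    conv_lhs => rw [← List.take_append_drop i l]
    rw [List.countP_append]
  have hdrop : (l.drop i).countP (fun x => decide (x < q)) = 0 := by
    rw [List.countP_eq_zero]
    intro a ha
    rw [List.mem_iff_getElem] at ha
    obtain ⟨j, hj, rfl⟩ := ha
    have hj' : i + j < l.length := by simp [List.length_drop] at hj; omega
    have heq : (l.drop i)[j] = l[i + j]'hj' := List.getElem_drop ..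
    rw [heq]
    simp only [decide_eq_true_eq, not_lt]
    have : l[i] ≤ l[i + j] := by
      have := hs.rel_get_of_le (a := ⟨i, hi⟩) (b := ⟨i + j, hj'⟩) (by simp)
      simpa using this
    linarith
  have htake : (l.take i).countP (fun x => decide (x < q)) ≤ i :=
    le_trans List.countP_le_length (by simp)
  omega

lemma ge_of_countP_le {l : List ℝ} (hs : l.Pairwise (· ≤ ·)) {q : ℝ} {i : ℕ} (hi : i < l.length)
    (hc : l.countP (fun x => decide (x < q)) ≤ i) : q ≤ l[i] := by
  by_contra h
  push_neg at h
  have hlen : (l.take (i+1)).length = i + 1 := by simp; omega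
  have htake : (l.take (i+1)).countP (fun x => decide (x < q)) = (l.take (i+1)).length := by
    rw [List.countP_eq_length]
    intro a ha
    rw [List.mem_iff_getElem] at ha
    obtain ⟨j, hj, rfl⟩ := ha
    have hj2 : j < i + 1 := by rw [hlen] at hj; exact hj
    have hj' : j < l.length := by omega
    have heq : (l.take (i+1))[j]'hj = l[j]'hj' := List.getElem_take ..
    rw [heq]
    simp only [decide_eq_true_eq]
    have : l[j] ≤ l[i] := by
      have := hs.rel_get_of_le (a := ⟨j, hj'⟩) (b := ⟨i, hi⟩) (by simp only [Fin.mk_le_mk]; omega)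
      simpa using this
    linarith
  have hsplit : l.countP (fun x => decide (x < q)) =
      (l.take (i+1)).countP (fun x => decide (x < q)) + (l.drop (i+1)).countP (fun x => decide (x < q)) := by
    conv_lhs => rw [← List.take_append_drop (i+1) l]
    rw [List.countP_append]
  rw [hlen] at htake
  omega


/-- The m-th smallest element (1-indexed, with multiplicity) of a finite multiset of reals. -/
noncomputable def nthSmallest (E : Multiset ℝ) (m : ℕ) : ℝ :=
  (E.sort (· ≤ ·)).getD (m - 1) 0

/-- The critical score q(E, ε): the ⌈(1+|E|)(1−ε)⌉-th smallest element of E. -/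
noncomputable def critScore (E : Multiset ℝ) (ε : ℝ) : ℝ :=
  nthSmallest E (⌈(1 + (Multiset.card E : ℝ)) * (1 - ε)⌉.toNat)

/-- Lemma 1 (Appendix B). -/
theorem lemma1 (E1 A B : Multiset ℝ) (ε : ℝ) (hε0 : 0 < ε) (hε1 : ε ≤ 1)
    (hε4 : ε ≤ 1 / 4)
    (hk1 : 1 ≤ ⌈(1 + (Multiset.card E1 : ℝ)) * (1 - ε)⌉)
    (hk2 : ⌈(1 + (Multiset.card E1 : ℝ)) * (1 - ε)⌉ ≤ (Multiset.card E1 : ℤ))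
    (tl tr : ℕ) (hAcard : Multiset.card A = tl) (hBcard : Multiset.card B = tr)
    (htl : 2 ≤ tl) (htr : tl ≤ tr)
    (hA : ∀ a ∈ A, a ≤ critScore E1 ε)
    (hB : ∀ b ∈ B, critScore E1 ε < b)
    (hk2' : ⌈(1 + (Multiset.card (E1 + A + B) : ℝ)) * (1 - ε)⌉ ≤
      (Multiset.card (E1 + A + B) : ℤ)) :
    critScore (E1 + A + B) ε ≥ critScore E1 ε := by
  classical
  set n := Multiset.card E1 with hn
  set q := critScore E1 ε with hq
  have hN : Multiset.card (E1 + A + B) = n + tl + tr := by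
    simp [Multiset.card_add, hAcard, hBcard, hn]
  set K1 : ℕ := (⌈(1 + (n : ℝ)) * (1 - ε)⌉).toNat with hK1def
  set K2 : ℕ := (⌈(1 + ((Multiset.card (E1 + A + B)) : ℝ)) * (1 - ε)⌉).toNat with hK2def
  have hK1cast : (K1 : ℤ) = ⌈(1 + (n : ℝ)) * (1 - ε)⌉ :=
    Int.toNat_of_nonneg (by linarith)
  -- ceiling inequality: ⌈big⌉ ≥ ⌈small⌉ + tl
  have hkey : ⌈(1 + (n : ℝ)) * (1 - ε)⌉ + (tl : ℤ) ≤
      ⌈(1 + ((Multiset.card (E1 + A + B)) : ℝ)) * (1 - ε)⌉ := by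
    have htl' : (2 : ℝ) ≤ (tl : ℝ) := by exact_mod_cast htl
    have htr' : (tl : ℝ) ≤ (tr : ℝ) := by exact_mod_cast htr
    have h2 : (tl : ℝ) ≤ ((tl : ℝ) + tr) * (1 - ε) := by nlinarith
    calc ⌈(1 + (n : ℝ)) * (1 - ε)⌉ + (tl : ℤ)
        = ⌈(1 + (n : ℝ)) * (1 - ε) + (tl : ℤ)⌉ := (Int.ceil_add_intCast _ _).symm
      _ ≤ ⌈(1 + ((Multiset.card (E1 + A + B)) : ℝ)) * (1 - ε)⌉ := by
          apply Int.ceil_le_ceil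
          rw [hN]
          push_cast
          nlinarith
  have hK2cast : (K2 : ℤ) = ⌈(1 + ((Multiset.card (E1 + A + B)) : ℝ)) * (1 - ε)⌉ :=
    Int.toNat_of_nonneg (by omega)
  have hK1n : K1 ≤ n := by omega
  have hK1pos : 1 ≤ K1 := by omega
  have hK2n : K2 ≤ n + tl + tr := by omega
  have hK2ge : K1 + tl ≤ K2 := by omega
  -- lists
  set L1 : List ℝ := E1.sort (· ≤ ·) with hL1
  set L2 : List ℝ := (E1 + A + B).sort (· ≤ ·) with hL2
  have hL1len : L1.length = n := by simp [hL1, hn]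
  have hL2len : L2.length = n + tl + tr := by simp [hL2, hN]
  have hidx1 : K1 - 1 < L1.length := by omega
  have hidx2 : K2 - 1 < L2.length := by omega
  have hq1 : q = L1[K1 - 1]'hidx1 := by
    rw [hq]
    show nthSmallest E1 _ = _
    rw [nthSmallest, List.getD_eq_getElem _ _ (by exact hidx1)]
  -- count bound on E1's list
  have hc1 : L1.countP (fun x => decide (x < q)) ≤ K1 - 1 :=
    countP_le_of_ge (Multiset.pairwise_sort _ _) hidx1 (le_of_eq hq1)
  -- countP over the big multiset
  have hcountE1 : Multiset.countP (fun x => x < q) E1 = L1.countP (fun x => decide (x < q)) := by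
    conv_lhs => rw [← Multiset.sort_eq E1 (· ≤ ·)]
    rw [Multiset.coe_countP]
  have hcountA : Multiset.countP (fun x => x < q) A ≤ tl := by
    rw [← hAcard]; exact Multiset.countP_le_card _ _
  have hcountB : Multiset.countP (fun x => x < q) B = 0 := by
    rw [Multiset.countP_eq_zero]
    intro b hb
    exact not_lt.mpr (le_of_lt (hB b hb))
  have hc2 : L2.countP (fun x => decide (x < q)) ≤ K2 - 1 := by
    have : L2.countP (fun x => decide (x < q)) = Multiset.countP (fun x => x < q) (E1 + A + B) := by
      conv_rhs => rw [← Multiset.sort_eq (E1 + A + B) (· ≤ ·)]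
      rw [Multiset.coe_countP]
    rw [this, Multiset.countP_add, Multiset.countP_add, hcountE1]
    omega
  have hfinal : q ≤ L2[K2 - 1]'hidx2 :=
    ge_of_countP_le (Multiset.pairwise_sort _ _) hidx2 hc2
  show critScore (E1 + A + B) ε ≥ q
  rw [critScore, nthSmallest, List.getD_eq_getElem _ _ (by exact hidx2)]
  exact hfinal
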